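/- Let k ≥ 1, m, n be natural numbers with m ≥ 2k and n ≥ 2k. For Lebesgue-almost every matrix A ∈ ℝ^{m×n} the following holds: for all vectors x, z ∈ ℝ^n, each with at most k nonzero entries, whose supports are disjoint, if |Ax| = |Az| entrywise then x = 0 and z = 0. That is, two sparse vectors with non-overlapping supports can map to the same phaseless measurements only if both are zero. -/

import Mathlib

open MeasureTheory Polynomial

namespace SparsePRAux

lemma continuous_mveval {d : ℕ} (p : MvPolynomial (Fin d) ℝ) :
    Continuous fun x : Fin d → ℝ => MvPolynomial.eval x p := by
  induction p using MvPolynomial.induction_on with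
  | C a => simpa using continuous_const
  | add p q hp hq => simp only [map_add]; exact hp.add hq
  | mul_X p i hp => simp only [map_mul, MvPolynomial.eval_X]; exact hp.mul (continuous_apply i)

lemma mv_zero_set_null : ∀ (d : ℕ) (p : MvPolynomial (Fin d) ℝ), p ≠ 0 →
    volume {x : Fin d → ℝ | MvPolynomial.eval x p = 0} = 0 := by
  intro d
  induction d with
  | zero =>
    intro p hp
    obtain ⟨a, rfl⟩ := MvPolynomial.C_surjective (Fin 0) p
    have ha : a ≠ 0 := fun h => hp (by rw [h, map_zero])
    have h0 : {x : Fin 0 → ℝ | MvPolynomial.eval x (MvPolynomial.C a) = 0} = ∅ := by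
      ext x; simp [ha]
    rw [h0, measure_empty]
  | succ d ih =>
    intro p hp
    classical
    set P : Polynomial (MvPolynomial (Fin d) ℝ) := MvPolynomial.finSuccEquiv ℝ d p with hPdef
    have hP0 : P ≠ 0 := by
      intro h
      apply hp
      have := congrArg (MvPolynomial.finSuccEquiv ℝ d).symm (h : P = 0)
      simpa [hPdef] using this
    have hlead : P.leadingCoeff ≠ 0 := Polynomial.leadingCoeff_ne_zero.mpr hP0
    obtain ⟨u, hu⟩ := MvPolynomial.ne_zero_iff.mp hlead
    -- univariate polynomial g whose value at y is coeff u of P evaluated at C y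
    set g : Polynomial ℝ :=
      ∑ j ∈ P.support, Polynomial.C (MvPolynomial.coeff u (P.coeff j)) * Polynomial.X ^ j with hg
    have hgcoeff : g.coeff P.natDegree = MvPolynomial.coeff u P.leadingCoeff := by
      rw [hg, Polynomial.finset_sum_coeff, Finset.sum_eq_single P.natDegree]
      · rw [Polynomial.coeff_C_mul, Polynomial.coeff_X_pow, if_pos rfl, mul_one]
        rfl
      · intro b _ hbne
        simp [Polynomial.coeff_C_mul, Polynomial.coeff_X_pow, Ne.symm hbne]
      · intro hnot
        simp [Polynomial.notMem_support_iff.mp hnot]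
    have hg0 : g ≠ 0 := by
      intro h
      rw [h, Polynomial.coeff_zero] at hgcoeff
      exact hu hgcoeff.symm
    have hcoeffq : ∀ y : ℝ,
        MvPolynomial.coeff u (Polynomial.eval (MvPolynomial.C y) P) = Polynomial.eval y g := by
      intro y
      rw [Polynomial.eval_eq_sum, Polynomial.sum_def, hg]
      rw [MvPolynomial.coeff_sum]
      rw [Polynomial.eval_finset_sum]
      refine Finset.sum_congr rfl fun j _ => ?_
      rw [← MvPolynomial.C_pow, mul_comm, MvPolynomial.coeff_C_mul,
        Polynomial.eval_mul, Polynomial.eval_C, Polynomial.eval_pow, Polynomial.eval_X, mul_comm]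
    have hqne : ∀ y : ℝ, Polynomial.eval y g ≠ 0 →
        Polynomial.eval (MvPolynomial.C y) P ≠ 0 := by
      intro y hy h
      have h2 := hcoeffq y
      rw [h] at h2
      simp at h2
      exact hy h2.symm
    -- section identity
    have hsect : ∀ (y : ℝ) (s : Fin d → ℝ),
        MvPolynomial.eval (Fin.cons y s) p
          = MvPolynomial.eval s (Polynomial.eval (MvPolynomial.C y) P) := by
      intro y s
      rw [MvPolynomial.eval_eq_eval_mv_eval']
      rw [Polynomial.eval_map]
      conv_rhs => rw [show Polynomial.eval (MvPolynomial.C y) P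
        = Polynomial.eval₂ (RingHom.id _) (MvPolynomial.C y) P from rfl]
      rw [Polynomial.hom_eval₂]
      simp
      rfl
    -- measure part
    have hmeas_cons : Measurable fun q : ℝ × (Fin d → ℝ) => (Fin.cons q.1 q.2 : Fin (d+1) → ℝ) :=
      measurable_pi_lambda _ fun i =>
        Fin.cases measurable_fst (fun j => (measurable_pi_apply j).comp measurable_snd) i
    set Tset : Set (ℝ × (Fin d → ℝ)) := {q | MvPolynomial.eval (Fin.cons q.1 q.2) p = 0} with hTdef
    have hT : MeasurableSet Tset := by
      have h1 : Tset
          = (fun q : ℝ × (Fin d → ℝ) => MvPolynomial.eval (Fin.cons q.1 q.2) p) ⁻¹' {0} := by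
        ext q; simp [hTdef]
      rw [h1]
      exact ((continuous_mveval p).measurable.comp hmeas_cons) (measurableSet_singleton 0)
    have hpre : {x : Fin (d+1) → ℝ | MvPolynomial.eval x p = 0}
        = (MeasurableEquiv.piFinSuccAbove (fun _ => ℝ) 0) ⁻¹' Tset := by
      ext x
      simp only [Set.mem_setOf_eq, Set.mem_preimage, MeasurableEquiv.piFinSuccAbove_apply,
        Fin.insertNthEquiv, Equiv.coe_fn_symm_mk, hTdef, Fin.removeNth_zero, Fin.cons_self_tail]
    have hmp := measurePreserving_piFinSuccAbove (fun _ : Fin (d+1) => (volume : Measure ℝ)) 0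
    rw [MeasureTheory.volume_pi, hpre, hmp.measure_preimage hT.nullMeasurableSet]
    refine (Measure.measure_prod_null hT).mpr ?_
    have hN : volume {y : ℝ | Polynomial.eval y g = 0} = 0 :=
      Set.Finite.measure_zero (Polynomial.finite_setOf_isRoot hg0) volume
    have hae : ∀ᵐ y : ℝ, Polynomial.eval y g ≠ 0 := by
      rw [ae_iff]; simpa using hN
    filter_upwards [hae] with y hy
    have hsec : Prod.mk y ⁻¹' Tset
        = {s : Fin d → ℝ | MvPolynomial.eval s (Polynomial.eval (MvPolynomial.C y) P) = 0} := by
      ext s; simp [hTdef, hsect]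
    rw [hsec, ← MeasureTheory.volume_pi]
    exact ih _ (hqne y hy)

noncomputable section
variable {k m n q : ℕ}

variable {k m n q : ℕ}

def sg (t s : Fin q → Bool) (i j : Fin q) : ℝ := if t j && s i then -1 else 1

lemma sg_sq (t s : Fin q → Bool) (i j : Fin q) : sg t s i j * sg t s i j = 1 := by
  unfold sg; split <;> norm_num

def pol (k m n : ℕ) (hm : 2*k ≤ m) (c : Fin (2*k) → Fin n)
    (t s : Fin (2*k) → Bool) : MvPolynomial (Fin (m*n)) ℝ :=
  Matrix.det (Matrix.of fun i j : Fin (2*k) =>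
    MvPolynomial.C (sg t s i j) * MvPolynomial.X (finProdFinEquiv (Fin.castLE hm i, c j)))

lemma eval_pol (hm : 2*k ≤ m) (c : Fin (2*k) → Fin n) (t s : Fin (2*k) → Bool)
    (x : Fin (m*n) → ℝ) :
    MvPolynomial.eval x (pol k m n hm c t s)
      = Matrix.det (Matrix.of fun i j : Fin (2*k) =>
          sg t s i j * x (finProdFinEquiv (Fin.castLE hm i, c j))) := by
  unfold pol
  rw [RingHom.map_det]
  congr 1
  ext i j
  simp [Matrix.map_apply]

lemma pol_ne_zero (hm : 2*k ≤ m) (c : Fin (2*k) → Fin n) (hc : Function.Injective c)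
    (t s : Fin (2*k) → Bool) : pol k m n hm c t s ≠ 0 := by
  classical
  intro h
  set x₀ : Fin (m*n) → ℝ := fun r =>
    ∑ i : Fin (2*k), if r = finProdFinEquiv (Fin.castLE hm i, c i) then sg t s i i else 0
    with hx₀
  have hx : MvPolynomial.eval x₀ (pol k m n hm c t s) = 1 := by
    rw [eval_pol]
    have hmat : (Matrix.of fun i j : Fin (2*k) =>
        sg t s i j * x₀ (finProdFinEquiv (Fin.castLE hm i, c j)))
        = (1 : Matrix (Fin (2*k)) (Fin (2*k)) ℝ) := by
      ext i j
      have hxval : x₀ (finProdFinEquiv (Fin.castLE hm i, c j))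
          = if i = j then sg t s i i else 0 := by
        rw [hx₀]
        have hterm : ∀ i' : Fin (2*k),
            (if finProdFinEquiv (Fin.castLE hm i, c j)
                = finProdFinEquiv (Fin.castLE hm i', c i') then sg t s i' i' else 0)
            = if i = i' ∧ j = i' then sg t s i' i' else 0 := by
          intro i'
          refine if_congr ?_ rfl rfl
          rw [Equiv.apply_eq_iff_eq, Prod.mk.injEq]
          constructor
          · rintro ⟨h1, h2⟩
            exact ⟨Fin.castLE_injective hm h1, hc h2⟩
          · rintro ⟨rfl, rfl⟩
            exact ⟨rfl, rfl⟩
        simp only [hterm]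
        by_cases hij : i = j
        · subst hij
          simp
        · rw [Finset.sum_eq_zero, if_neg hij]
          intro i' _
          rw [if_neg]
          rintro ⟨rfl, rfl⟩
          exact hij rfl
      rw [Matrix.of_apply, hxval, Matrix.one_apply]
      by_cases hij : i = j
      · subst hij
        rw [if_pos rfl, if_pos rfl, sg_sq]
      · rw [if_neg hij, if_neg hij, mul_zero]
    rw [hmat, Matrix.det_one]
  rw [h] at hx
  simp at hx

def Lmap (m n : ℕ) : (Fin m → Fin n → ℝ) →ₗ[ℝ] (Fin (m*n) → ℝ) where
  toFun A := fun r => A (finProdFinEquiv.symm r).1 (finProdFinEquiv.symm r).2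
  map_add' A B := rfl
  map_smul' c A := rfl

lemma Lmap_surjective (m n : ℕ) : Function.Surjective (Lmap m n) := by
  intro y
  refine ⟨fun i j => y (finProdFinEquiv (i, j)), funext fun r => ?_⟩
  show y (finProdFinEquiv ((finProdFinEquiv.symm r).1, (finProdFinEquiv.symm r).2)) = y r
  rw [Prod.mk.eta, Equiv.apply_symm_apply]

lemma Lmap_apply (m n : ℕ) (A : Fin m → Fin n → ℝ) (i : Fin m) (j : Fin n) :
    Lmap m n A (finProdFinEquiv (i, j)) = A i j := by
  show A (finProdFinEquiv.symm (finProdFinEquiv (i, j))).1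
      (finProdFinEquiv.symm (finProdFinEquiv (i, j))).2 = A i j
  rw [Equiv.symm_apply_apply]

end
end SparsePRAux

open SparsePRAux in
/-- For `m ≥ 2k` and `n ≥ 2k`, for Lebesgue-almost every real `m × n` matrix `A`:
two `k`-sparse vectors with disjoint supports and the same phaseless measurements
`|Ax| = |Az|` must both be zero. -/
theorem disjoint_support_sparse_phase_retrieval_ae (k m n : ℕ) (hk : 1 ≤ k)
    (hm : 2 * k ≤ m) (hn : 2 * k ≤ n) :
    ∀ᵐ A : Fin m → Fin n → ℝ, ∀ x z : Fin n → ℝ,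
      (Function.support x).ncard ≤ k →
      (Function.support z).ncard ≤ k →
      Disjoint (Function.support x) (Function.support z) →
      (∀ i, |(Matrix.of A).mulVec x i| = |(Matrix.of A).mulVec z i|) →
      x = 0 ∧ z = 0 := by
  classical
  have hae : ∀ᵐ A : Fin m → Fin n → ℝ, ∀ (c : Fin (2*k) → Fin n) (t s : Fin (2*k) → Bool),
      Function.Injective c →
      MvPolynomial.eval (Lmap m n A) (pol k m n hm c t s) ≠ 0 := by
    rw [MeasureTheory.ae_all_iff]
    intro c
    rw [MeasureTheory.ae_all_iff]
    intro t
    rw [MeasureTheory.ae_all_iff]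
    intro s
    by_cases hcinj : Function.Injective c
    · have hnull := mv_zero_set_null (m*n) (pol k m n hm c t s) (pol_ne_zero hm c hcinj t s)
      have hsmeas : MeasurableSet
          {y : Fin (m*n) → ℝ | MvPolynomial.eval y (pol k m n hm c t s) ≠ 0} := by
        have hrw : {y : Fin (m*n) → ℝ | MvPolynomial.eval y (pol k m n hm c t s) ≠ 0}
            = ((fun y : Fin (m*n) → ℝ => MvPolynomial.eval y (pol k m n hm c t s)) ⁻¹' {0})ᶜ := by
          ext y; simp
        rw [hrw]
        exact (((continuous_mveval _).measurable) (measurableSet_singleton 0)).compl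
      have hmem : ∀ᵐ y : Fin (m*n) → ℝ,
          y ∈ {y : Fin (m*n) → ℝ | MvPolynomial.eval y (pol k m n hm c t s) ≠ 0} := by
        rw [MeasureTheory.ae_iff]
        simpa using hnull
      have hLae := (MeasureTheory.ae_comp_linearMap_mem_iff (Lmap m n) volume volume
        (Lmap_surjective m n) hsmeas).mpr hmem
      filter_upwards [hLae] with A hA _
      exact hA
    · filter_upwards with A hc'
      exact absurd hc' hcinj
  filter_upwards [hae] with A H x z hx hz hdisj habs

  classical
  set S := Function.support x with hS
  set T := Function.support z with hT
  have hSTfin : (S ∪ T).Finite := Set.toFinite _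
  set F : Finset (Fin n) := hSTfin.toFinset with hF
  have hFcard : F.card ≤ 2*k := by
    rw [hF, ← Set.ncard_eq_toFinset_card]
    calc (S ∪ T).ncard ≤ S.ncard + T.ncard := Set.ncard_union_le S T
    _ ≤ k + k := add_le_add hx hz
    _ = 2*k := by ring
  obtain ⟨G, hFG, -, hGcard⟩ :=
    Finset.exists_subsuperset_card_eq (Finset.subset_univ F) hFcard (by simpa using hn)
  set E2 := G.equivFinOfCardEq hGcard with hE2
  set c : Fin (2*k) → Fin n := fun j => (E2.symm j : Fin n) with hc
  have hcinj : Function.Injective c := fun a b hab =>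
    E2.symm.injective (Subtype.coe_injective hab)
  have hrange : ∀ l : Fin n, l ∈ G → ∃ j, c j = l := by
    intro l hl
    exact ⟨E2 ⟨l, hl⟩, by rw [hc]; simp⟩
  have hout : ∀ l : Fin n, l ∉ G → x l = 0 ∧ z l = 0 := by
    intro l hl
    have hlF : l ∉ F := fun h => hl (hFG h)
    rw [hF, Set.Finite.mem_toFinset] at hlF
    constructor
    · by_contra h; exact hlF (Or.inl h)
    · by_contra h; exact hlF (Or.inr h)
  set t : Fin (2*k) → Bool := fun j => decide (z (c j) ≠ 0) with ht
  set s : Fin (2*k) → Bool := fun i =>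
    decide ((Matrix.of A).mulVec x (Fin.castLE hm i) = (Matrix.of A).mulVec z (Fin.castLE hm i))
    with hs
  set M := Matrix.of fun i j : Fin (2*k) => sg t s i j * A (Fin.castLE hm i) (c j) with hM
  have hdet : M.det ≠ 0 := by
    have h0 := H c t s hcinj
    rw [eval_pol] at h0
    have hMeq : M = Matrix.of fun i j : Fin (2*k) =>
        sg t s i j * (Lmap m n A) (finProdFinEquiv (Fin.castLE hm i, c j)) := by
      ext i j
      show sg t s i j * A (Fin.castLE hm i) (c j)
          = sg t s i j * (Lmap m n A) (finProdFinEquiv (Fin.castLE hm i, c j))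
      rw [Lmap_apply]
    rw [hMeq]
    exact h0
  set u : Fin (2*k) → ℝ := fun j => x (c j) + z (c j) with hu
  have hsum : ∀ (i : Fin (2*k)) (v : Fin n → ℝ), (∀ l, l ∉ G → v l = 0) →
      ∑ j : Fin (2*k), A (Fin.castLE hm i) (c j) * v (c j)
        = ∑ l : Fin n, A (Fin.castLE hm i) l * v l := by
    intro i v hv
    rw [Fintype.sum_equiv E2.symm
      (fun j => A (Fin.castLE hm i) (c j) * v (c j))
      (fun g : {a // a ∈ G} => A (Fin.castLE hm i) (g : Fin n) * v (g : Fin n))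
      (fun j => rfl)]
    rw [Finset.sum_coe_sort G (fun l => A (Fin.castLE hm i) l * v l)]
    exact Finset.sum_subset (Finset.subset_univ G)
      (fun l _ hl => by rw [hv l hl, mul_zero])
  have hMu : M.mulVec u = 0 := by
    funext i
    have hterm : ∀ j : Fin (2*k), M i j * u j
        = A (Fin.castLE hm i) (c j) * x (c j)
          + (if s i then -1 else 1) * (A (Fin.castLE hm i) (c j) * z (c j)) := by
      intro j
      rw [hM]
      by_cases hzc : z (c j) = 0
      · have htj : t j = false := by rw [ht]; simp [hzc]
        rw [Matrix.of_apply]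
        rw [show sg t s i j = 1 from by rw [sg, htj]; simp]
        rw [hu]
        cases hsi : s i <;> simp [hzc]
      · have hxc : x (c j) = 0 := by
          have hmem : c j ∈ T := hzc
          have := Set.disjoint_right.mp hdisj hmem
          rw [hS] at this
          simpa using this
        have htj : t j = true := by rw [ht]; simp [hzc]
        rw [Matrix.of_apply]
        rw [show sg t s i j = (if s i then -1 else 1) from by rw [sg, htj]; simp]
        rw [hu]
        cases hsi : s i <;> simp [hxc]
    show (M.mulVec u) i = 0
    rw [Matrix.mulVec, dotProduct]
    rw [Finset.sum_congr rfl (fun j _ => hterm j)]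
    rw [Finset.sum_add_distrib, ← Finset.mul_sum]
    rw [hsum i x (fun l hl => (hout l hl).1), hsum i z (fun l hl => (hout l hl).2)]
    have hmx : (Matrix.of A).mulVec x (Fin.castLE hm i)
        = ∑ l : Fin n, A (Fin.castLE hm i) l * x l := by
      rw [Matrix.mulVec, dotProduct]; rfl
    have hmz : (Matrix.of A).mulVec z (Fin.castLE hm i)
        = ∑ l : Fin n, A (Fin.castLE hm i) l * z l := by
      rw [Matrix.mulVec, dotProduct]; rfl
    rw [← hmx, ← hmz]
    by_cases hsi : (Matrix.of A).mulVec x (Fin.castLE hm i)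
        = (Matrix.of A).mulVec z (Fin.castLE hm i)
    · rw [show s i = true from by rw [hs]; simp [hsi]]
      rw [hsi]; norm_num
    · have := habs (Fin.castLE hm i)
      rcases abs_eq_abs.mp this with h1 | h1
      · exact absurd h1 hsi
      · rw [show s i = false from by rw [hs]; simp [hsi]]
        rw [h1]; norm_num
  have hu0 : u = 0 := by
    have h1 : M⁻¹.mulVec (M.mulVec u) = M⁻¹.mulVec 0 := by rw [hMu]
    rwa [Matrix.mulVec_mulVec, Matrix.nonsing_inv_mul M (isUnit_iff_ne_zero.mpr hdet),
      Matrix.one_mulVec, Matrix.mulVec_zero] at h1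
  have key : ∀ l : Fin n, x l + z l = 0 := by
    intro l
    by_cases hl : l ∈ G
    · obtain ⟨j, rfl⟩ := hrange l hl
      have := congrFun hu0 j
      simpa [hu] using this
    · rw [(hout l hl).1, (hout l hl).2, add_zero]
  constructor
  · funext l
    show x l = 0
    by_cases hxl : x l = 0
    · exact hxl
    · have hzl : z l = 0 := by
        have : l ∉ T := Set.disjoint_left.mp hdisj hxl
        simpa [hT] using this
      have := key l
      rw [hzl, add_zero] at this
      exact this
  · funext l
    show z l = 0
    by_cases hzl : z l = 0
    · exact hzl
    · have hxl : x l = 0 := by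
        have : l ∉ S := Set.disjoint_right.mp hdisj hzl
        simpa [hS] using this
      have := key l
      rw [hxl, zero_add] at this
      exact this
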